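/- Let ε be a real number with 0 ≤ ε ≤ 1. Every bipartite multigraph G has a factor F such that for each vertex v, |d_F(v) − ε·d_G(v)| < 1. -/

import Mathlib

open Finset

namespace Paper

variable {V E τ : Type*}

/-- Degree of vertex `v` in the edge subset `S` of a multigraph whose edges `e : E`
have endpoints `ends e : Sym2 V`. -/
noncomputable def mdeg (ends : E → Sym2 V) (S : Set E) (v : V) : ℕ :=
  {e ∈ S | v ∈ ends e}.ncard

/-- The multigraph given by `ends` has no loops. -/
def Loopless (ends : E → Sym2 V) : Prop := ∀ e : E, ¬ (ends e).IsDiag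

/-- Edges of `S` with (at least) one end inside `A` and one end outside `A`;
for loopless multigraphs these are the edges with exactly one end in `A`. -/
def crossEdges (ends : E → Sym2 V) (S : Set E) (A : Set V) : Set E :=
  {e ∈ S | (∃ x ∈ ends e, x ∈ A) ∧ ∃ y ∈ ends e, y ∉ A}

/-- The (spanning sub)multigraph with edge set `S` is `k`-edge-connected. -/
def MEdgeConnected (ends : E → Sym2 V) (S : Set E) (k : ℕ) : Prop :=
  ∀ A : Set V, A.Nonempty → A ≠ Set.univ → k ≤ (crossEdges ends S A).ncard

/-- The simple graph on `V` underlying the edge subset `S`. -/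
def toSimple (ends : E → Sym2 V) (S : Set E) : SimpleGraph V where
  Adj u v := u ≠ v ∧ ∃ e ∈ S, ends e = s(u, v)
  symm := by
    constructor
    rintro u v ⟨h, e, he, h2⟩
    exact ⟨h.symm, e, he, by rwa [Sym2.eq_swap]⟩
  loopless := by constructor; rintro v ⟨h, -⟩; exact h rfl

/-- The edge subset `S` forms a spanning tree of the multigraph given by `ends`. -/
def IsSpanningTree [Fintype V] (ends : E → Sym2 V) (S : Set E) : Prop :=
  (toSimple ends S).Connected ∧ S.ncard = Fintype.card V - 1

/-- The (spanning sub)multigraph with edge set `S` contains `m` pairwise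
edge-disjoint spanning trees. -/
def TreeConnected [Fintype V] (ends : E → Sym2 V) (S : Set E) (m : ℕ) : Prop :=
  ∃ Tr : Fin m → Set E, (∀ i, Tr i ⊆ S) ∧
    (Pairwise fun i j => Disjoint (Tr i) (Tr j)) ∧
    ∀ i, IsSpanningTree ends (Tr i)

/-- The edge subset `S` has an orientation (each edge `e ∈ S` gets a tail `o e`,
one of its endpoints) in which every vertex has out-degree at least `l`. -/
def HasOrientationOutdeg (ends : E → Sym2 V) (S : Set E) (l : ℕ) : Prop :=
  ∃ o : E → V, (∀ e ∈ S, o e ∈ ends e) ∧ ∀ v : V, l ≤ {e ∈ S | o e = v}.ncard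

/-- The (spanning sub)multigraph with edge set `S` is `(m, l)`-partition-connected. -/
def PartitionConnected [Fintype V] (ends : E → Sym2 V) (S : Set E) (m l : ℕ) : Prop :=
  ∃ Tm F : Set E, Disjoint Tm F ∧ Tm ∪ F = S ∧
    TreeConnected ends Tm m ∧ HasOrientationOutdeg ends F l

/-- `(X, Y)` is a bipartition of the multigraph given by `ends`. -/
def MBipartition (ends : E → Sym2 V) (X Y : Set V) : Prop :=
  Disjoint X Y ∧ X ∪ Y = Set.univ ∧ ∀ e : E, ∃ x ∈ X, ∃ y ∈ Y, ends e = s(x, y)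

open Classical in
/-- Sum of an integer-valued function over a set of vertices. -/
noncomputable def setSum [Fintype V] (A : Set V) (f : V → ℤ) : ℤ :=
  ∑ v ∈ Finset.univ.filter (· ∈ A), f v

/-! ### Simple graphs -/

/-- Degree of `v` in a simple graph. -/
noncomputable def sdeg (G : SimpleGraph V) (v : V) : ℕ := (G.neighborSet v).ncard

/-- A simple graph is `k`-edge-connected. -/
def SEdgeConnected (G : SimpleGraph V) (k : ℕ) : Prop :=
  ∀ A : Set V, A.Nonempty → A ≠ Set.univ →
    k ≤ {e ∈ G.edgeSet | (∃ x ∈ e, x ∈ A) ∧ ∃ y ∈ e, y ∉ A}.ncard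

/-- A simple graph is `(m, l)`-partition-connected. -/
def SPartitionConnected [Fintype V] (G : SimpleGraph V) (m l : ℕ) : Prop :=
  PartitionConnected (fun e : G.edgeSet => (e : Sym2 V)) Set.univ m l

/-- `A` is one of the two partite sets of (a bipartition of) `G`. -/
def BipartitionSide (G : SimpleGraph V) (A : Set V) : Prop :=
  ∀ a b, G.Adj a b → (a ∈ A ↔ b ∉ A)

/-- `f` maps `T` onto a copy of `T` inside `G` (a subgraph isomorphic to `T`). -/
def IsCopy (T : SimpleGraph τ) (G : SimpleGraph V) (f : τ → V) : Prop :=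
  Function.Injective f ∧ ∀ a b, T.Adj a b → G.Adj (f a) (f b)

/-- Edge set of the copy of `T` given by `f`. -/
def copyEdges (T : SimpleGraph τ) (f : τ → V) : Set (Sym2 V) := Sym2.map f '' T.edgeSet

/-- `G` admits a `T`-edge-decomposition: its edge set is partitioned into
edge sets of copies of `T`. -/
def HasTDecomposition (T : SimpleGraph τ) (G : SimpleGraph V) : Prop :=
  ∃ (n : ℕ) (f : Fin n → τ → V),
    (∀ i, IsCopy T G (f i)) ∧
    (Pairwise fun i j => Disjoint (copyEdges T (f i)) (copyEdges T (f j))) ∧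
    ⋃ i, copyEdges T (f i) = G.edgeSet

open Classical in
/-- The non-leaf vertices of `T` lying in `A`. -/
noncomputable def nonLeaf [Fintype τ] (T : SimpleGraph τ) (A : Set τ) : Finset τ :=
  Finset.univ.filter (fun v => v ∈ A ∧ 2 ≤ sdeg T v)

/-- The subgraph of `G` induced by `X`, viewed as a graph on the same vertex set. -/
def inducedOn (G : SimpleGraph V) (X : Set V) : SimpleGraph V where
  Adj u v := G.Adj u v ∧ u ∈ X ∧ v ∈ X
  symm := by constructor; rintro u v ⟨h, hu, hv⟩; exact ⟨h.symm, hv, hu⟩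
  loopless := by constructor; rintro v ⟨h, -⟩; exact G.loopless.irrefl v h

section HoffmanAux
set_option linter.unusedSectionVars false
set_option linter.unusedVariables false
variable {V E : Type*} [Fintype V] [Fintype E]

attribute [local instance] Classical.propDecidable


noncomputable def sVal (ends : E → Sym2 V) (w : E → ℝ) (v : V) : ℝ :=
  ∑ e ∈ univ.filter (fun e => v ∈ ends e), w e

noncomputable def frS (w : E → ℝ) : Finset E :=
  univ.filter (fun e => w e ≠ 0 ∧ w e ≠ 1)

noncomputable def frV (ends : E → Sym2 V) (w : E → ℝ) (v : V) : Finset E :=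
  (frS w).filter (fun e => v ∈ ends e)

def Inv (ends : E → Sym2 V) (t : V → ℝ) (w : E → ℝ) : Prop :=
  ∀ v, (2 ≤ (frV ends w v).card → sVal ends w v = t v) ∧
    (∀ e, frV ends w v = {e} →
      t v - 1 < sVal ends w v - w e ∧ sVal ends w v - w e < t v) ∧
    (frV ends w v = ∅ → |sVal ends w v - t v| < 1)

lemma ends_pair {ends : E → Sym2 V} {X Y : Set V}
    (hbip : MBipartition ends X Y) (e : E) :
    ∃ x y, x ∈ X ∧ y ∈ Y ∧ x ≠ y ∧ ends e = s(x, y) := by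
  obtain ⟨x, hx, y, hy, hxy⟩ := hbip.2.2 e
  exact ⟨x, y, hx, hy, fun h => (Set.disjoint_left.mp hbip.1 hx) (h ▸ hy), hxy⟩

lemma filter_ends_eq {ends : E → Sym2 V} {e : E} {x y : V} (hxy : x ≠ y)
    (he : ends e = s(x, y)) :
    (univ.filter (fun v => v ∈ ends e)) = {x, y} := by
  ext v
  simp [he, Sym2.mem_iff]

lemma card_ends (ends : E → Sym2 V) {X Y : Set V}
    (hbip : MBipartition ends X Y) (e : E) :
    (univ.filter (fun v => v ∈ ends e)).card = 2 := by
  obtain ⟨x, y, hx, hy, hxy, he⟩ := ends_pair hbip e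
  rw [filter_ends_eq hxy he, card_insert_of_notMem (by simp [hxy]), card_singleton]

section Kernel

variable (ends : E → Sym2 V)

/-- incidence map into coordinates indexed by a finset of vertices -/
noncomputable def Phi (A : Finset V) : ((E → ℝ) →ₗ[ℝ] (↥A → ℝ)) where
  toFun z := fun v => ∑ e ∈ univ.filter (fun e => (v : V) ∈ ends e), z e
  map_add' z₁ z₂ := by funext v; simp [Finset.sum_add_distrib]
  map_smul' c z := by funext v; simp [Finset.mul_sum]

noncomputable def extMap (Ef : Finset E) : (↥Ef → ℝ) →ₗ[ℝ] (E → ℝ) where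
  toFun z := fun e => if h : e ∈ Ef then z ⟨e, h⟩ else 0
  map_add' z₁ z₂ := by funext e; by_cases h : e ∈ Ef <;> simp [h]
  map_smul' c z := by funext e; by_cases h : e ∈ Ef <;> simp [h]

noncomputable def sig (X : Set V) (A : Finset V) : (↥A → ℝ) →ₗ[ℝ] ℝ where
  toFun g := ∑ v : ↥A, (if (v : V) ∈ X then (1:ℝ) else -1) * g v
  map_add' g₁ g₂ := by simp [mul_add, Finset.sum_add_distrib]
  map_smul' c g := by
    simp only [Finset.mul_sum, RingHom.id_apply, smul_eq_mul]
    congr 1; funext v; simp [smul_eq_mul]; try ring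

lemma kernel_lemma {X Y : Set V} (hbip : MBipartition ends X Y)
    (Ef : Finset E) (hne : Ef.Nonempty) :
    ∃ z : E → ℝ, (∀ e, e ∉ Ef → z e = 0) ∧ (∃ e, z e ≠ 0) ∧
      ∀ v, 2 ≤ (Ef.filter (fun e => v ∈ ends e)).card →
        ∑ e ∈ Ef.filter (fun e => v ∈ ends e), z e = 0 := by
  classical
  set Vf : Finset V := univ.filter (fun v => ∃ e ∈ Ef, v ∈ ends e) with hVfdef
  set W : Finset V := univ.filter
    (fun v => 2 ≤ (Ef.filter (fun e => v ∈ ends e)).card) with hWdef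
  have hWVf : W ⊆ Vf := by
    intro v hv
    rw [hWdef, mem_filter] at hv
    have h2 : 0 < (Ef.filter (fun e => v ∈ ends e)).card := by omega
    obtain ⟨e, he⟩ := Finset.card_pos.mp h2
    rw [mem_filter] at he
    rw [hVfdef, mem_filter]
    exact ⟨mem_univ v, e, he.1, he.2⟩
  have hVfne : Vf.Nonempty := by
    obtain ⟨e0, he0⟩ := hne
    obtain ⟨x, y, hx, hy, hxy, hex⟩ := ends_pair hbip e0
    exact ⟨x, by rw [hVfdef, mem_filter]
                 exact ⟨mem_univ x, e0, he0, by rw [hex]; exact Sym2.mem_mk_left x y⟩⟩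
  set ΨW : (↥Ef → ℝ) →ₗ[ℝ] (↥W → ℝ) := (Phi ends W) ∘ₗ (extMap Ef) with hΨW
  -- rank bound
  have hrank : Module.finrank ℝ (LinearMap.range ΨW) < Ef.card := by
    by_cases hcase : Vf.card ≤ Ef.card
    · -- bipartite sign functional kills the range
      have hEfpos : 1 ≤ Ef.card := Finset.card_pos.mpr hne
      have hVfpos : 1 ≤ Vf.card := Finset.card_pos.mpr hVfne
      have hcomp : ∀ z0 : ↥Ef → ℝ, sig X Vf ((Phi ends Vf) (extMap Ef z0)) = 0 := by
        intro z0
        set z : E → ℝ := extMap Ef z0 with hz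
        have hzoff : ∀ e, e ∉ Ef → z e = 0 := by
          intro e he; simp [hz, extMap, he]
        show ∑ v : ↥Vf, (if (v : V) ∈ X then (1:ℝ) else -1) *
            (∑ e ∈ univ.filter (fun e => (v : V) ∈ ends e), z e) = 0
        have hstep : ∀ v : ↥Vf, (if (v : V) ∈ X then (1:ℝ) else -1) *
            (∑ e ∈ univ.filter (fun e => (v : V) ∈ ends e), z e) =
            ∑ e ∈ (univ : Finset E), (if (v : V) ∈ ends e then
              (if (v : V) ∈ X then (1:ℝ) else -1) else 0) * z e := by
          intro v
          rw [Finset.mul_sum, Finset.sum_filter]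
          congr 1; funext e
          split_ifs <;> simp
        rw [Finset.sum_congr rfl (fun v _ => hstep v), Finset.sum_comm]
        apply Finset.sum_eq_zero
        intro e _
        by_cases hzE : z e = 0
        · simp [hzE]
        · have heEf : e ∈ Ef := by
            by_contra h; exact hzE (hzoff e h)
          rw [← Finset.sum_mul]
          obtain ⟨x, y, hx, hy, hxy, hex⟩ := ends_pair hbip e
          have hsum0 : ∑ v : ↥Vf, (if (v : V) ∈ ends e then
              (if (v : V) ∈ X then (1:ℝ) else -1) else 0) = 0 := by
            rw [Finset.sum_coe_sort Vf
              (fun v => if v ∈ ends e then (if v ∈ X then (1:ℝ) else -1) else 0)]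
            rw [← Finset.sum_filter]
            have hpair : Vf.filter (fun v => v ∈ ends e) = {x, y} := by
              ext v
              simp only [mem_filter, hVfdef, mem_univ, true_and, hex,
                Sym2.mem_iff, Finset.mem_insert, Finset.mem_singleton]
              constructor
              · rintro ⟨-, h⟩; exact h
              · rintro (rfl | rfl)
                · exact ⟨⟨e, heEf, hex ▸ Sym2.mem_mk_left _ _⟩, Or.inl rfl⟩
                · exact ⟨⟨e, heEf, hex ▸ Sym2.mem_mk_right _ _⟩, Or.inr rfl⟩
            rw [hpair, Finset.sum_pair hxy]
            have hyX : y ∉ X := Set.disjoint_right.mp hbip.1 hy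
            simp [hx, hyX]
          rw [hsum0, zero_mul]
      set σ : (↥Vf → ℝ) →ₗ[ℝ] ℝ := sig X Vf with hσ
      have hle : LinearMap.range ((Phi ends Vf) ∘ₗ extMap Ef) ≤ LinearMap.ker σ := by
        rintro _ ⟨z0, rfl⟩
        exact hcomp z0
      have hσne : σ ≠ 0 := by
        obtain ⟨v0, hv0⟩ := hVfne
        intro h0
        have h1 : σ (Pi.single (⟨v0, hv0⟩ : ↥Vf) 1) =
            (if v0 ∈ X then (1:ℝ) else -1) := by
          show ∑ v : ↥Vf, _ = _
          rw [Finset.sum_eq_single (⟨v0, hv0⟩ : ↥Vf)]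
          · simp
          · intro b _ hb; simp [Pi.single_apply, hb]
          · intro h; exact absurd (Finset.mem_univ _) h
        rw [h0] at h1
        simp only [LinearMap.zero_apply] at h1
        split_ifs at h1 <;> norm_num at h1
      have hrange1 : Module.finrank ℝ (LinearMap.range σ) = 1 := by
        have hle1 : Module.finrank ℝ (LinearMap.range σ) ≤ 1 := by
          simpa using Submodule.finrank_le (LinearMap.range σ)
        have hne0 : LinearMap.range σ ≠ ⊥ :=
          fun h => hσne (LinearMap.range_eq_bot.mp h)
        have : Module.finrank ℝ (LinearMap.range σ) ≠ 0 :=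
          fun h => hne0 (Submodule.finrank_eq_zero.mp h)
        omega
      have hkerσ : Module.finrank ℝ (LinearMap.ker σ) = Vf.card - 1 := by
        have hrn := LinearMap.finrank_range_add_finrank_ker σ
        rw [hrange1, Module.finrank_fintype_fun_eq_card, Fintype.card_coe] at hrn
        omega
      -- factor ΨW through Phi Vf
      set R : (↥Vf → ℝ) →ₗ[ℝ] (↥W → ℝ) :=
        LinearMap.funLeft ℝ ℝ (fun v : ↥W => (⟨(v : V), hWVf v.2⟩ : ↥Vf)) with hR
      have hfact : ΨW = R ∘ₗ ((Phi ends Vf) ∘ₗ extMap Ef) := by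
        apply LinearMap.ext
        intro z0
        funext v
        rfl
      have hb1 : Module.finrank ℝ (LinearMap.range ΨW) ≤
          Module.finrank ℝ (LinearMap.range ((Phi ends Vf) ∘ₗ extMap Ef)) := by
        rw [hfact, LinearMap.range_comp]
        exact Submodule.finrank_map_le R _
      have hb2 : Module.finrank ℝ (LinearMap.range ((Phi ends Vf) ∘ₗ extMap Ef)) ≤
          Vf.card - 1 := by
        rw [← hkerσ]
        exact Submodule.finrank_mono hle
      omega
    · -- counting: fewer constraints than fractional edges
      push_neg at hcase
      set d : V → ℕ := fun v => (Ef.filter (fun e => v ∈ ends e)).card with hd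
      have hhand : ∑ v ∈ (univ : Finset V), d v = 2 * Ef.card := by
        calc ∑ v ∈ (univ : Finset V), d v
            = ∑ v ∈ (univ : Finset V), ∑ e ∈ Ef, if v ∈ ends e then 1 else 0 := by
              simp only [hd, Finset.card_filter]
          _ = ∑ e ∈ Ef, ∑ v ∈ (univ : Finset V), if v ∈ ends e then 1 else 0 :=
              Finset.sum_comm
          _ = ∑ e ∈ Ef, (univ.filter (fun v => v ∈ ends e)).card := by
              simp only [Finset.card_filter]
          _ = ∑ e ∈ Ef, 2 := Finset.sum_congr rfl (fun e _ => card_ends ends hbip e)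
          _ = 2 * Ef.card := by rw [Finset.sum_const, smul_eq_mul, mul_comm]
      have hW2 : 2 * W.card ≤ ∑ v ∈ W, d v := by
        have := Finset.card_nsmul_le_sum W d 2 (by
          intro v hv
          rw [hWdef, mem_filter] at hv
          exact hv.2)
        simpa [smul_eq_mul, mul_comm] using this
      have hVfW1 : (Vf \ W).card ≤ ∑ v ∈ Vf \ W, d v := by
        have := Finset.card_nsmul_le_sum (Vf \ W) d 1 (by
          intro v hv
          have hvVf : v ∈ Vf := (Finset.mem_sdiff.mp hv).1
          rw [hVfdef, mem_filter] at hvVf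
          obtain ⟨-, e, he, hve⟩ := hvVf
          have : e ∈ Ef.filter (fun e => v ∈ ends e) := mem_filter.mpr ⟨he, hve⟩
          exact Finset.card_pos.mpr ⟨e, this⟩)
        simpa using this
      have hsplit : ∑ v ∈ Vf \ W, d v + ∑ v ∈ W, d v = ∑ v ∈ Vf, d v :=
        Finset.sum_sdiff hWVf
      have hsub : ∑ v ∈ Vf, d v ≤ ∑ v ∈ (univ : Finset V), d v :=
        Finset.sum_le_sum_of_subset (subset_univ _)
      have hcardsd : (Vf \ W).card = Vf.card - W.card := Finset.card_sdiff_of_subset hWVf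
      have hWle : W.card ≤ Vf.card := Finset.card_le_card hWVf
      have hWlt : W.card < Ef.card := by omega
      have hb : Module.finrank ℝ (LinearMap.range ΨW) ≤ W.card := by
        have := Submodule.finrank_le (LinearMap.range ΨW)
        rwa [Module.finrank_fintype_fun_eq_card, Fintype.card_coe] at this
      omega
  -- kernel nontrivial
  have hker : ∃ z0 : ↥Ef → ℝ, z0 ∈ LinearMap.ker ΨW ∧ z0 ≠ 0 := by
    have hdim : Module.finrank ℝ (↥Ef → ℝ) = Ef.card := by
      rw [Module.finrank_fintype_fun_eq_card, Fintype.card_coe]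
    have hrn := LinearMap.finrank_range_add_finrank_ker ΨW
    rw [hdim] at hrn
    have : LinearMap.ker ΨW ≠ ⊥ := by
      intro hbot
      rw [hbot, finrank_bot] at hrn
      omega
    exact Submodule.ne_bot_iff _ |>.mp this
  obtain ⟨z0, hz0ker, hz0ne⟩ := hker
  refine ⟨extMap Ef z0, ?_, ?_, ?_⟩
  · intro e he; simp [extMap, he]
  · obtain ⟨a, ha⟩ := Function.ne_iff.mp hz0ne
    exact ⟨a, by simpa [extMap, a.2] using ha⟩
  · intro v hv
    have hvW : v ∈ W := by rw [hWdef, mem_filter]; exact ⟨mem_univ v, hv⟩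
    have h0 : ΨW z0 = 0 := hz0ker
    have h1 : ∑ e ∈ univ.filter (fun e => v ∈ ends e), extMap Ef z0 e = 0 := by
      have := congrFun h0 ⟨v, hvW⟩
      simpa [hΨW, Phi] using this
    rw [← h1]
    apply Finset.sum_subset (Finset.filter_subset_filter _ (subset_univ Ef))
    intro e he hne'
    rw [mem_filter] at he hne'
    have : e ∉ Ef := fun h => hne' ⟨h, he.2⟩
    simp [extMap, this]

end Kernel

section Descent

variable (ends : E → Sym2 V)

lemma base_case (t : V → ℝ) (w : E → ℝ) (hfr : frS w = ∅) (hinv : Inv ends t w) :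
    ∃ F : Set E, ∀ v, |(mdeg ends F v : ℝ) - t v| < 1 := by
  classical
  have hw01 : ∀ e : E, w e = 0 ∨ w e = 1 := by
    intro e
    by_contra h
    push_neg at h
    have : e ∈ frS w := mem_filter.mpr ⟨mem_univ e, h.1, h.2⟩
    rw [hfr] at this
    exact absurd this (notMem_empty e)
  refine ⟨{e | w e = 1}, fun v => ?_⟩
  have h1 : mdeg ends {e | w e = 1} v =
      (univ.filter (fun e => v ∈ ends e ∧ w e = 1)).card := by
    rw [mdeg]
    rw [show {e ∈ {e : E | w e = 1} | v ∈ ends e} =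
        ↑(univ.filter (fun e => v ∈ ends e ∧ w e = 1)) from by
      ext e; simp [Set.mem_setOf_eq, and_comm]]
    exact Set.ncard_coe_finset _
  have h2 : sVal ends w v = (mdeg ends {e | w e = 1} v : ℝ) := by
    rw [sVal, h1]
    rw [show (univ.filter (fun e => v ∈ ends e ∧ w e = 1)) =
        (univ.filter (fun e => v ∈ ends e)).filter (fun e => w e = 1) from by
      rw [Finset.filter_filter]]
    rw [← Finset.sum_boole]
    apply Finset.sum_congr rfl
    intro e _
    rcases hw01 e with h | h <;> simp [h]
  have h3 : frV ends w v = ∅ := by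
    rw [frV, hfr, Finset.filter_empty]
  have := (hinv v).2.2 h3
  rwa [h2] at this

lemma descend {X Y : Set V} (hbip : MBipartition ends X Y) (t : V → ℝ) :
    ∀ n (w : E → ℝ), (∀ e, 0 ≤ w e ∧ w e ≤ 1) → (frS w).card ≤ n → Inv ends t w →
    ∃ F : Set E, ∀ v, |(mdeg ends F v : ℝ) - t v| < 1 := by
  intro n
  induction n with
  | zero =>
    intro w hb hc hinv
    exact base_case ends t w (Finset.card_eq_zero.mp (Nat.le_zero.mp hc)) hinv
  | succ n ih =>
    intro w hb hc hinv
    by_cases hfr : frS w = ∅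
    · exact base_case ends t w hfr hinv
    · have hne : (frS w).Nonempty := Finset.nonempty_of_ne_empty hfr
      obtain ⟨z, hzoff, ⟨e₀, hze₀⟩, hzsum⟩ := kernel_lemma ends hbip (frS w) hne
      set P : Finset E := univ.filter (fun e => z e ≠ 0) with hPdef
      have hP : P.Nonempty := ⟨e₀, mem_filter.mpr ⟨mem_univ _, hze₀⟩⟩
      have hPfr : ∀ e ∈ P, 0 < w e ∧ w e < 1 := by
        intro e he
        rw [hPdef, mem_filter] at he
        have heEf : e ∈ frS w := by
          by_contra h
          exact he.2 (hzoff e h)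
        rw [frS, mem_filter] at heEf
        exact ⟨lt_of_le_of_ne (hb e).1 (Ne.symm heEf.2.1),
          lt_of_le_of_ne (hb e).2 heEf.2.2⟩
      set b : E → ℝ := fun e => if 0 < z e then (1 - w e) / z e else w e / (-z e)
        with hbdef
      have hbpos : ∀ e ∈ P, 0 < b e := by
        intro e he
        obtain ⟨hw0, hw1⟩ := hPfr e he
        have hz : z e ≠ 0 := (mem_filter.mp he).2
        rw [hbdef]
        by_cases hzp : 0 < z e
        · simp only [hzp, if_true]
          exact div_pos (by linarith) hzp
        · simp only [hzp, if_false]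
          have : z e < 0 := lt_of_le_of_ne (not_lt.mp hzp) hz
          exact div_pos hw0 (by linarith)
      set δ : ℝ := P.inf' hP b with hδdef
      have hδpos : 0 < δ := (Finset.lt_inf'_iff hP).mpr hbpos
      have hδle : ∀ e ∈ P, δ ≤ b e := fun e he => Finset.inf'_le b he
      obtain ⟨estar, hestarP, hestareq⟩ := Finset.exists_mem_eq_inf' hP b
      set w' : E → ℝ := fun e => w e + δ * z e with hw'def
      have hw'z : ∀ e, z e = 0 → w' e = w e := by
        intro e h; rw [hw'def]; simp [h]
      have hb' : ∀ e, 0 ≤ w' e ∧ w' e ≤ 1 := by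
        intro e
        by_cases hz : z e = 0
        · rw [hw'z e hz]; exact hb e
        · have heP : e ∈ P := mem_filter.mpr ⟨mem_univ _, hz⟩
          obtain ⟨hw0, hw1⟩ := hPfr e heP
          have hle := hδle e heP
          rw [hbdef] at hle
          rw [hw'def]
          by_cases hzp : 0 < z e
          · simp only [hzp, if_true] at hle
            have h1 : δ * z e ≤ 1 - w e := by
              rw [← le_div_iff₀ hzp]; exact hle
            have h2 : 0 < δ * z e := mul_pos hδpos hzp
            constructor <;> simp only [] <;> linarith
          · have hzn : z e < 0 := lt_of_le_of_ne (not_lt.mp hzp) hz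
            simp only [hzp, if_false] at hle
            have h1 : δ * (-z e) ≤ w e := by
              rw [← le_div_iff₀ (by linarith : (0:ℝ) < -z e)]; exact hle
            have h2 : δ * z e < 0 := mul_neg_of_pos_of_neg hδpos hzn
            constructor <;> simp only [] <;> linarith
      have hfr' : frS w' ⊆ frS w := by
        intro e he
        by_contra h
        have hz := hzoff e h
        rw [frS, mem_filter] at he
        rw [hw'z e hz] at he
        exact h (mem_filter.mpr ⟨mem_univ _, he.2⟩)
      have hestar_not : estar ∉ frS w' := by
        have hz : z estar ≠ 0 := (mem_filter.mp hestarP).2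
        have hw'val : w' estar = 0 ∨ w' estar = 1 := by
          have hbeq : δ = b estar := hδdef.trans hestareq
          by_cases hzp : 0 < z estar
          · right
            simp only [hbdef, hzp, if_true] at hbeq
            show w estar + δ * z estar = 1
            rw [hbeq, div_mul_cancel₀ _ hz]
            ring
          · left
            simp only [hbdef, hzp, if_false] at hbeq
            show w estar + δ * z estar = 0
            rw [hbeq]
            have hzz : w estar / -z estar * z estar = -w estar := by
              field_simp
            linarith [hzz]
        intro hmem
        rw [frS, mem_filter] at hmem
        rcases hw'val with h | h
        · exact hmem.2.1 h
        · exact hmem.2.2 h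
      have hcard : (frS w').card ≤ n := by
        have hsub : frS w' ⊆ (frS w).erase estar := by
          intro e he
          rw [Finset.mem_erase]
          exact ⟨fun h => hestar_not (h ▸ he), hfr' he⟩
        have h1 : (frS w').card ≤ (frS w).card - 1 := by
          have := Finset.card_le_card hsub
          rwa [Finset.card_erase_of_mem (by
            by_contra h
            exact (mem_filter.mp hestarP).2 (hzoff estar h))] at this
        omega
      have hsval : ∀ v, sVal ends w' v =
          sVal ends w v + δ * ∑ e ∈ univ.filter (fun e => v ∈ ends e), z e := by
        intro v
        rw [sVal, sVal, Finset.mul_sum, ← Finset.sum_add_distrib]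
      have hfrV' : ∀ v, frV ends w' v ⊆ frV ends w v :=
        fun v => Finset.filter_subset_filter _ hfr'
      have hw'frac : ∀ e ∈ frS w', 0 < w' e ∧ w' e < 1 := by
        intro e he
        rw [frS, mem_filter] at he
        exact ⟨lt_of_le_of_ne (hb' e).1 (Ne.symm he.2.1),
          lt_of_le_of_ne (hb' e).2 he.2.2⟩
      have hinv' : Inv ends t w' := by
        intro v
        by_cases h2 : 2 ≤ (frV ends w v).card
        · have hs : sVal ends w v = t v := (hinv v).1 h2
          have hZ : ∑ e ∈ univ.filter (fun e => v ∈ ends e), z e = 0 := by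
            rw [← Finset.sum_subset (Finset.filter_subset_filter _ (subset_univ (frS w)))
              (by
                intro e he hne'
                by_contra h
                have heEf : e ∈ frS w := by
                  by_contra hEf
                  exact h (hzoff e hEf)
                exact hne' (mem_filter.mpr ⟨heEf, (mem_filter.mp he).2⟩))]
            exact hzsum v h2
          have hs' : sVal ends w' v = t v := by
            rw [hsval v, hZ, mul_zero, add_zero, hs]
          refine ⟨fun _ => hs', fun e he => ?_, fun _ => by rw [hs']; simp⟩
          have heFr : e ∈ frS w' :=
            (mem_filter.mp (he ▸ Finset.mem_singleton_self e : e ∈ frV ends w' v)).1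
          obtain ⟨hh0, hh1⟩ := hw'frac e heFr
          rw [hs']
          constructor <;> linarith
        · by_cases h1 : (frV ends w v).card = 1
          · obtain ⟨e1, he1⟩ := Finset.card_eq_one.mp h1
            have he1mem : e1 ∈ frV ends w v := he1 ▸ Finset.mem_singleton_self e1
            have hve1 : v ∈ ends e1 := (mem_filter.mp he1mem).2
            have hZ : ∑ e ∈ univ.filter (fun e => v ∈ ends e), z e = z e1 := by
              apply Finset.sum_eq_single_of_mem e1 (mem_filter.mpr ⟨mem_univ _, hve1⟩)
              intro e he hene
              by_contra h
              have : e ∈ frV ends w v := mem_filter.mpr ⟨by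
                by_contra hEf
                exact h (hzoff e hEf), (mem_filter.mp he).2⟩
              rw [he1] at this
              exact hene (Finset.mem_singleton.mp this)
            obtain ⟨hN1, hN2⟩ := (hinv v).2.1 e1 he1
            have hsub1 : frV ends w' v ⊆ {e1} := he1 ▸ hfrV' v
            have hs' : sVal ends w' v = sVal ends w v + δ * z e1 := by
              rw [hsval v, hZ]
            have hw'e1 : w' e1 = w e1 + δ * z e1 := rfl
            refine ⟨fun hcc => ?_, fun e he => ?_, fun hEmp => ?_⟩
            · have := Finset.card_le_card hsub1
              rw [Finset.card_singleton] at this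
              omega
            · have : e = e1 := Finset.mem_singleton.mp
                (hsub1 (he ▸ Finset.mem_singleton_self e))
              subst this
              rw [hs', hw'e1]
              constructor <;> [linarith; linarith]
            · have he1out : e1 ∉ frS w' := by
                intro hcontra
                have : e1 ∈ frV ends w' v := mem_filter.mpr ⟨hcontra, hve1⟩
                rw [hEmp] at this
                exact absurd this (notMem_empty e1)
              have hw01 : w' e1 = 0 ∨ w' e1 = 1 := by
                by_contra h
                push_neg at h
                exact he1out (mem_filter.mpr ⟨mem_univ _, h.1, h.2⟩)
              rw [abs_lt, hs']
              rcases hw01 with h | h <;> rw [hw'e1] at h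
              · constructor <;> linarith
              · constructor <;> linarith
          · have hEmp : frV ends w v = ∅ :=
              Finset.card_eq_zero.mp (by omega)
            have hZ : ∑ e ∈ univ.filter (fun e => v ∈ ends e), z e = 0 := by
              apply Finset.sum_eq_zero
              intro e he
              by_contra h
              have : e ∈ frV ends w v := mem_filter.mpr ⟨by
                by_contra hEf
                exact h (hzoff e hEf), (mem_filter.mp he).2⟩
              rw [hEmp] at this
              exact absurd this (notMem_empty e)
            have hs' : sVal ends w' v = sVal ends w v := by
              rw [hsval v, hZ, mul_zero, add_zero]
            have hEmp' : frV ends w' v = ∅ :=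
              Finset.subset_empty.mp (hEmp ▸ hfrV' v)
            refine ⟨fun hcc => ?_, fun e he => ?_, fun _ => ?_⟩
            · rw [hEmp', Finset.card_empty] at hcc; omega
            · rw [hEmp'] at he
              exact absurd he.symm (Finset.singleton_ne_empty e)
            · rw [hs']
              exact (hinv v).2.2 hEmp
      exact ih w' hb' hcard hinv'

end Descent


end HoffmanAux

/-- (Hoffman.)  Every bipartite multigraph `G` has a factor `F` with
`|d_F(v) - ε·d_G(v)| < 1` for every vertex `v`. -/
theorem stmt11 {V E : Type*} [Fintype V] [Fintype E]
    (ends : E → Sym2 V) (X Y : Set V) (hbip : MBipartition ends X Y)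
    (ε : ℝ) (hε1 : 0 ≤ ε) (hε2 : ε ≤ 1) :
    ∃ F : Set E, ∀ v : V,
      |(mdeg ends F v : ℝ) - ε * (mdeg ends Set.univ v : ℝ)| < 1 := by

  classical
  set t : V → ℝ := fun v => ε * (mdeg ends Set.univ v : ℝ) with ht
  have hmdeg : ∀ v : V, (mdeg ends Set.univ v : ℝ) =
      ((univ.filter (fun e => v ∈ ends e)).card : ℝ) := by
    intro v
    rw [mdeg]
    congr 1
    rw [show {e ∈ Set.univ | v ∈ ends e} = ↑(univ.filter (fun e : E => v ∈ ends e)) from by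
      ext e; simp]
    exact Set.ncard_coe_finset _
  set w0 : E → ℝ := fun _ => ε with hw0
  have hsval0 : ∀ v, sVal ends w0 v = t v := by
    intro v
    show ∑ _e ∈ univ.filter (fun e => v ∈ ends e), ε = ε * (mdeg ends Set.univ v : ℝ)
    rw [Finset.sum_const, hmdeg v, nsmul_eq_mul, mul_comm]
  have hinv : Inv ends t w0 := by
    intro v
    refine ⟨fun _ => hsval0 v, fun e he => ?_, fun _ => by rw [hsval0 v]; simp⟩
    have heFr : e ∈ frS w0 :=
      (mem_filter.mp (he ▸ Finset.mem_singleton_self e : e ∈ frV ends w0 v)).1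
    rw [frS, mem_filter] at heFr
    have h0 : 0 < ε := lt_of_le_of_ne hε1 (Ne.symm heFr.2.1)
    have h1 : ε < 1 := lt_of_le_of_ne hε2 heFr.2.2
    have hwe : w0 e = ε := rfl
    rw [hsval0 v, hwe]
    constructor <;> linarith
  obtain ⟨F, hF⟩ := descend ends hbip t (frS w0).card w0
    (fun e => ⟨hε1, hε2⟩) le_rfl hinv
  exact ⟨F, fun v => by rw [ht] at hF; exact hF v⟩

end Paper
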